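/- Let Ω ⊂ ℝ^N be a bounded open set with smooth (C²) boundary. Then for a ≥ 0, the integral ∫_Ω dist(x, ∂Ω)^{-a} dx is finite if a < 1. -/

import Mathlib

open MeasureTheory Metric Set

-- coordinate bound
lemma coord_le_norm {ι : Type*} [Fintype ι] [DecidableEq ι] (v : EuclideanSpace ℝ ι) (j : ι) :
    |v j| ≤ ‖v‖ := by
  have h := abs_real_inner_le_norm (EuclideanSpace.single j (1:ℝ)) v
  simpa [EuclideanSpace.inner_single_left, EuclideanSpace.norm_single] using h

lemma slab_bound {n : ℕ} (f : EuclideanSpace ℝ (Fin (n+1)) → ℝ) (hf : ContDiff ℝ 1 f)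
    (z e : EuclideanSpace ℝ (Fin (n+1))) (he : ‖e‖ = 1) {r c : ℝ} (t : ℝ)
    (hc : 0 < c)
    (hder : ∀ y ∈ Metric.ball z r, c ≤ fderiv ℝ f y e) :
    volume {x ∈ Metric.ball z r | |f x| ≤ t} ≤
      ENNReal.ofReal (2*t/c) * (ENNReal.ofReal (2*r))^n := by
  classical
  -- orthonormal basis with b 0 = e
  obtain ⟨b, hb⟩ : ∃ b : OrthonormalBasis (Fin (n+1)) ℝ (EuclideanSpace ℝ (Fin (n+1))),
      b 0 = e := by
    have hcard : Module.finrank ℝ (EuclideanSpace ℝ (Fin (n+1))) = Fintype.card (Fin (n+1)) := by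
      simp [finrank_euclideanSpace]
    have horth : Orthonormal ℝ (({0} : Set (Fin (n+1))).restrict (fun _ => e)) := by
      constructor
      · intro i; exact he
      · intro i j hij
        exact absurd (Subtype.ext (i.2.trans j.2.symm)) hij
    obtain ⟨b, hb⟩ := horth.exists_orthonormalBasis_extension_of_card_eq hcard
    exact ⟨b, hb 0 rfl⟩
  set S : Set (EuclideanSpace ℝ (Fin (n+1))) := {x ∈ Metric.ball z r | |f x| ≤ t} with hS
  have hSmeas : MeasurableSet S := by
    have h2 : MeasurableSet {x : EuclideanSpace ℝ (Fin (n+1)) | |f x| ≤ t} :=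
      measurableSet_le hf.continuous.abs.measurable measurable_const
    exact isOpen_ball.measurableSet.inter h2
  -- measurable equiv chain
  let med : EuclideanSpace ℝ (Fin (n+1)) ≃ᵐ ℝ × (Fin n → ℝ) :=
    b.measurableEquiv.trans ((MeasurableEquiv.toLp 2 (Fin (n+1) → ℝ)).symm.trans
      (MeasurableEquiv.piFinSuccAbove (fun _ => ℝ) 0))
  have hmp : MeasurePreserving med volume
      ((volume : Measure ℝ).prod (Measure.pi fun _ : Fin n => volume)) := by
    have h1 := b.measurePreserving_measurableEquiv
    have h2 := EuclideanSpace.volume_preserving_symm_measurableEquiv_toLp (Fin (n+1))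
    have h3 := measurePreserving_piFinSuccAbove (fun _ : Fin (n+1) => (volume : Measure ℝ)) 0
    rw [← volume_pi] at h3
    exact (h3.comp h2).comp h1
  have hΨmp : MeasurePreserving med.symm
      ((volume : Measure ℝ).prod (Measure.pi fun _ : Fin n => volume)) volume :=
    hmp.symm med
  set Ψ : ℝ × (Fin n → ℝ) → EuclideanSpace ℝ (Fin (n+1)) := ⇑med.symm with hΨdef
  -- coordinates of Ψ
  have hrepr : ∀ (s : ℝ) (y : Fin n → ℝ) (j : Fin (n+1)),
      b.repr (Ψ (s, y)) j = Fin.cons (α := fun _ => ℝ) s y j := by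
    intro s y j
    have h0 : Ψ (s, y) =
        b.repr.symm (WithLp.toLp 2 (Fin.insertNth 0 s y)) := rfl
    rw [h0, LinearIsometryEquiv.apply_symm_apply]
    simp [Fin.insertNth_zero']
  -- decomposition: Ψ (s, y) = s • e + Ψ (0, y)
  have hdec : ∀ (s : ℝ) (y : Fin n → ℝ), Ψ (s, y) = s • e + Ψ (0, y) := by
    intro s y
    apply b.repr.injective
    have hre : b.repr e = EuclideanSpace.single 0 1 := by
      rw [← hb, OrthonormalBasis.repr_self]
    ext j
    rw [map_add]
    have h1 : (b.repr (s • e) + b.repr (Ψ (0, y))) j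
        = s * (b.repr e) j + (b.repr (Ψ (0, y))) j := by
      rw [_root_.map_smul]; rfl
    rw [h1, hre, hrepr, hrepr]
    rcases Fin.eq_zero_or_eq_succ j with rfl | ⟨k, rfl⟩
    · simp [EuclideanSpace.single_apply]
    · simp [EuclideanSpace.single_apply, Fin.succ_ne_zero]
  -- volume of S via Fubini
  have key : volume S = ∫⁻ y, volume {s : ℝ | Ψ (s, y) ∈ S}
      ∂(Measure.pi fun _ : Fin n => volume) := by
    rw [← hΨmp.measure_preimage hSmeas.nullMeasurableSet,
      Measure.prod_apply_symm (med.symm.measurable hSmeas)]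
    rfl
  -- fiber diameter bound
  have fiber_diam : ∀ (y : Fin n → ℝ), ∀ s₁ ∈ {s : ℝ | Ψ (s, y) ∈ S},
      ∀ s₂ ∈ {s : ℝ | Ψ (s, y) ∈ S}, s₂ - s₁ ≤ 2 * t / c := by
    intro y s₁ hs₁ s₂ hs₂
    rcases le_or_gt s₂ s₁ with hle | hlt
    · have ht0 : 0 ≤ t := le_trans (abs_nonneg _) hs₁.2
      have h2 : 0 ≤ 2 * t / c := by positivity
      linarith
    · set q := Ψ (0, y) with hq
      set γ : ℝ → EuclideanSpace ℝ (Fin (n+1)) := fun s => s • e + q with hγ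
      have hs₁' : Ψ (s₁, y) ∈ S := hs₁
      have hs₂' : Ψ (s₂, y) ∈ S := hs₂
      rw [hdec] at hs₁' hs₂'
      have hγ₁ : γ s₁ ∈ S := hs₁'
      have hγ₂ : γ s₂ ∈ S := hs₂' 
      have hγmem : ∀ x ∈ Set.Icc s₁ s₂, γ x ∈ Metric.ball z r := by
        intro x hx
        set θ : ℝ := (x - s₁) / (s₂ - s₁) with hθ
        have hθ0 : 0 ≤ θ := div_nonneg (by linarith [hx.1]) (by linarith)
        have hθ1 : θ ≤ 1 := by
          rw [hθ, div_le_one (by linarith)]; linarith [hx.2]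
        have hmem := (convex_ball z r) hγ₁.1 hγ₂.1 (by linarith : (0:ℝ) ≤ 1 - θ) hθ0
          (by ring : (1 - θ) + θ = 1)
        have hco : (1 - θ) • γ s₁ + θ • γ s₂ = γ ((1 - θ) * s₁ + θ * s₂) := by
          simp only [hγ, smul_add, smul_smul]
          module
        have hxeq : (1 - θ) * s₁ + θ * s₂ = x := by
          have hne : s₂ - s₁ ≠ 0 := by linarith
          have hθm : θ * (s₂ - s₁) = x - s₁ := div_mul_cancel₀ _ hne
          calc (1 - θ) * s₁ + θ * s₂ = s₁ + θ * (s₂ - s₁) := by ring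
            _ = x := by rw [hθm]; ring
        rw [hco, hxeq] at hmem
        exact hmem
      set g : ℝ → ℝ := fun s => f (γ s) with hg
      have hg' : ∀ x : ℝ, HasDerivAt g ((fderiv ℝ f (γ x)) e) x := by
        intro x
        have h1 : HasDerivAt (fun s : ℝ => s • e + q) e x := by
          simpa using ((hasDerivAt_id x).smul_const e).add_const q
        exact ((hf.differentiable one_ne_zero (γ x)).hasFDerivAt).comp_hasDerivAt x h1
      have hcont : ContinuousOn g (Set.Icc s₁ s₂) :=
        (hf.continuous.comp (by fun_prop)).continuousOn
      have hdiff : DifferentiableOn ℝ g (interior (Set.Icc s₁ s₂)) :=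
        fun x _ => ((hg' x).differentiableAt).differentiableWithinAt
      have hge : ∀ x ∈ interior (Set.Icc s₁ s₂), c ≤ deriv g x := by
        intro x hx
        rw [interior_Icc] at hx
        rw [(hg' x).deriv]
        exact hder _ (hγmem x (Set.Ioo_subset_Icc_self hx))
      have hmvt := (convex_Icc s₁ s₂).mul_sub_le_image_sub_of_le_deriv hcont hdiff hge
        s₁ (Set.left_mem_Icc.2 hlt.le) s₂ (Set.right_mem_Icc.2 hlt.le) hlt.le
      have hb1 : |g s₁| ≤ t := hγ₁.2
      have hb2 : |g s₂| ≤ t := hγ₂.2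
      have : c * (s₂ - s₁) ≤ 2 * t := by
        have := abs_le.1 hb1
        have := abs_le.1 hb2
        linarith
      rw [le_div_iff₀ hc]
      calc (s₂ - s₁) * c = c * (s₂ - s₁) := mul_comm _ _
        _ ≤ 2 * t := this
  have fiber_vol : ∀ y : Fin n → ℝ,
      volume {s : ℝ | Ψ (s, y) ∈ S} ≤ ENNReal.ofReal (2 * t / c) := by
    intro y
    refine le_trans (Real.volume_le_diam _) (EMetric.diam_le ?_)
    intro s₁ hs₁ s₂ hs₂
    rw [edist_dist, Real.dist_eq]
    apply ENNReal.ofReal_le_ofReal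
    rw [abs_sub_le_iff]
    exact ⟨fiber_diam y s₂ hs₂ s₁ hs₁, fiber_diam y s₁ hs₁ s₂ hs₂⟩
  -- support in a box
  set w : Fin n → ℝ := fun k => b.repr z (Fin.succAbove 0 k) with hw
  set box : Set (Fin n → ℝ) := Set.pi Set.univ (fun k => Set.Icc (w k - r) (w k + r)) with hbox
  have hsupp : ∀ y : Fin n → ℝ, {s : ℝ | Ψ (s, y) ∈ S}.Nonempty → y ∈ box := by
    rintro y ⟨s, hs⟩
    intro k _
    have hx : Ψ (s, y) ∈ Metric.ball z r := hs.1
    have hnorm : ‖b.repr (Ψ (s, y)) - b.repr z‖ < r := by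
      rw [← map_sub, LinearIsometryEquiv.norm_map]
      exact mem_ball_iff_norm.1 hx
    have hco := coord_le_norm (b.repr (Ψ (s, y)) - b.repr z) (Fin.succAbove 0 k)
    have happ : (b.repr (Ψ (s, y)) - b.repr z) (Fin.succAbove 0 k) = y k - w k := by
      have h1 : (b.repr (Ψ (s, y)) - b.repr z) (Fin.succAbove 0 k)
          = b.repr (Ψ (s, y)) (Fin.succAbove 0 k) - b.repr z (Fin.succAbove 0 k) := rfl
      rw [h1, hrepr]
      simp [hw]
    rw [happ] at hco
    have := lt_of_le_of_lt hco hnorm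
    have h2 := abs_le.1 this.le
    exact ⟨by linarith [h2.1], by linarith [h2.2]⟩
  rw [key]
  have step1 : ∫⁻ y, volume {s : ℝ | Ψ (s, y) ∈ S} ∂(Measure.pi fun _ : Fin n => volume)
      ≤ ∫⁻ y, box.indicator (fun _ => ENNReal.ofReal (2 * t / c)) y
        ∂(Measure.pi fun _ : Fin n => volume) := by
    apply lintegral_mono
    intro y
    by_cases hy : y ∈ box
    · rw [Set.indicator_of_mem hy]; exact fiber_vol y
    · rw [Set.indicator_of_notMem hy]
      have hempty : {s : ℝ | Ψ (s, y) ∈ S} = ∅ := by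
        by_contra hne
        exact hy (hsupp y (Set.nonempty_iff_ne_empty.2 hne))
      simp [hempty]
  refine le_trans step1 ?_
  have hboxmeas : MeasurableSet box := MeasurableSet.univ_pi fun k => measurableSet_Icc
  rw [lintegral_indicator_const hboxmeas]
  have hpibox : (Measure.pi fun _ : Fin n => (volume : Measure ℝ)) box
      = (ENNReal.ofReal (2 * r)) ^ n := by
    rw [hbox, Measure.pi_pi]
    have h1 : ∀ k : Fin n, (volume : Measure ℝ) (Set.Icc (w k - r) (w k + r))
        = ENNReal.ofReal (2 * r) := by
      intro k
      rw [Real.volume_Icc]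
      congr 1
      ring
    simp only [h1]
    simp [Finset.prod_const]
  rw [hpibox]
theorem stmt_4 {N : ℕ} (Ω : Set (EuclideanSpace ℝ (Fin N)))
    (hΩopen : IsOpen Ω) (hΩbdd : Bornology.IsBounded Ω)
    (f : EuclideanSpace ℝ (Fin N) → ℝ) (hf : ContDiff ℝ 2 f)
    (hΩf : Ω = {x | f x < 0}) (hfr : frontier Ω = {x | f x = 0})
    (hgrad : ∀ x ∈ frontier Ω, fderiv ℝ f x ≠ 0)
    (a : ℝ) (ha0 : 0 ≤ a) (ha1 : a < 1) :
    MeasureTheory.IntegrableOn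
      (fun x => (Metric.infDist x (frontier Ω)) ^ (-a)) Ω
      MeasureTheory.volume := by
  classical
  by_cases haz : a = 0
  · subst haz
    have hconst : (fun x : EuclideanSpace ℝ (Fin N) =>
        (Metric.infDist x (frontier Ω)) ^ (-(0:ℝ))) = fun _ => (1:ℝ) := by
      funext x; rw [neg_zero, Real.rpow_zero]
    rw [hconst]
    exact integrableOn_const hΩbdd.measure_lt_top.ne
  have ha : 0 < a := lt_of_le_of_ne ha0 (Ne.symm haz)
  by_cases hFe : frontier Ω = ∅
  · have hzero : (fun x : EuclideanSpace ℝ (Fin N) =>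
        (Metric.infDist x (frontier Ω)) ^ (-a)) = fun _ => (0:ℝ) := by
      funext x
      rw [hFe, Metric.infDist_empty]
      exact Real.zero_rpow (by linarith)
    rw [hzero]
    exact integrableOn_zero
  have hFne : (frontier Ω).Nonempty := Set.nonempty_iff_ne_empty.2 hFe
  obtain ⟨n, rfl⟩ : ∃ n, N = n + 1 := by
    cases N with
    | zero =>
      exfalso
      obtain ⟨x, hx⟩ := hFne
      have hsub : Subsingleton (EuclideanSpace ℝ (Fin 0)) :=
        ⟨fun u v => by ext i; exact i.elim0⟩
      rcases Set.eq_empty_or_nonempty Ω with h | ⟨y, hy⟩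
      · rw [h, frontier_empty] at hx; exact hx
      · have hU : Ω = Set.univ :=
          Set.eq_univ_of_forall fun w => (Subsingleton.elim w y) ▸ hy
        rw [hU, frontier_univ] at hx; exact hx
    | succ n => exact ⟨n, rfl⟩
  -- Setup
  have hFcl : IsClosed (frontier Ω) := isClosed_frontier
  have hFb : Bornology.IsBounded (frontier Ω) :=
    hΩbdd.closure.subset frontier_subset_closure
  have hFcpt : IsCompact (frontier Ω) :=
    Metric.isCompact_of_isClosed_isBounded hFcl hFb
  have hclcpt : IsCompact (closure Ω) :=
    Metric.isCompact_of_isClosed_isBounded isClosed_closure hΩbdd.closure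
  have hf1 : ContDiff ℝ 1 f := hf.of_le one_le_two
  have hfd : Continuous fun x => ‖fderiv ℝ f x‖ :=
    (hf.continuous_fderiv (by norm_num)).norm
  -- Lipschitz bound L
  obtain ⟨R, hR⟩ := hΩbdd.closure.subset_closedBall (0 : EuclideanSpace ℝ (Fin (n+1)))
  set B := Metric.closedBall (0 : EuclideanSpace ℝ (Fin (n+1))) R with hB
  have hBcpt : IsCompact B := isCompact_closedBall _ _
  obtain ⟨M, hM⟩ : ∃ M, ∀ x ∈ B, ‖fderiv ℝ f x‖ ≤ M := by
    obtain ⟨M, hM⟩ := (hBcpt.bddAbove_image hfd.continuousOn)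
    exact ⟨M, fun x hx => hM (Set.mem_image_of_mem _ hx)⟩
  set L : ℝ := max M 1 with hLdef
  have hL : 0 < L := lt_of_lt_of_le one_pos (le_max_right _ _)
  have hdist : ∀ x ∈ Ω, |f x| ≤ L * Metric.infDist x (frontier Ω) := by
    intro x hx
    obtain ⟨y, hyF, hyd⟩ := hFcpt.exists_infDist_eq_dist hFne x
    have hfy : f y = 0 := by
      have := hfr ▸ hyF; exact this
    have hxB : x ∈ B := hR (subset_closure hx)
    have hyB : y ∈ B := hR (frontier_subset_closure hyF)
    have hlip : ‖f x - f y‖ ≤ L * ‖x - y‖ :=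
      (convex_closedBall (0 : EuclideanSpace ℝ (Fin (n+1))) R).norm_image_sub_le_of_norm_fderiv_le
      (fun u _ => (hf1.differentiable one_ne_zero).differentiableAt)
      (fun u hu => le_trans (hM u hu) (le_max_left M 1)) hyB hxB
    calc |f x| = ‖f x - f y‖ := by rw [hfy, sub_zero]; rfl
      _ ≤ L * ‖x - y‖ := hlip
      _ = L * Metric.infDist x (frontier Ω) := by rw [hyd, dist_eq_norm]
  -- minimum gradient norm c on the frontier
  obtain ⟨z₀, hz₀F, hz₀min⟩ := hFcpt.exists_isMinOn hFne hfd.continuousOn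
  set c : ℝ := ‖fderiv ℝ f z₀‖ with hcdef
  have hc : 0 < c := norm_pos_iff.2 (hgrad z₀ hz₀F)
  have hc2 : 0 < c / 2 := by linarith
  -- directions and radii
  have hcover : ∀ z ∈ frontier Ω, ∃ ρ : ℝ, 0 < ρ ∧ ∃ e : EuclideanSpace ℝ (Fin (n+1)),
      ‖e‖ = 1 ∧ ∀ y ∈ Metric.ball z ρ, c / 2 ≤ (fderiv ℝ f y) e := by
    intro z hz
    set v := (InnerProductSpace.toDual ℝ (EuclideanSpace ℝ (Fin (n+1)))).symm (fderiv ℝ f z)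
      with hv
    have hvn : ‖v‖ = ‖fderiv ℝ f z‖ := LinearIsometryEquiv.norm_map _ _
    have hcz : c ≤ ‖fderiv ℝ f z‖ := hz₀min hz
    have hvpos : 0 < ‖v‖ := by rw [hvn]; exact lt_of_lt_of_le hc hcz
    set e : EuclideanSpace ℝ (Fin (n+1)) := ‖v‖⁻¹ • v with he
    have hen : ‖e‖ = 1 := by
      rw [he, norm_smul, norm_inv, norm_norm, inv_mul_cancel₀ (ne_of_gt hvpos)]
    have hfe : (fderiv ℝ f z) e = ‖v‖ := by
      have h1 : fderiv ℝ f z = InnerProductSpace.toDual ℝ _ v :=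
        (LinearIsometryEquiv.apply_symm_apply _ _).symm
      rw [h1, InnerProductSpace.toDual_apply_apply, he, real_inner_smul_right,
        real_inner_self_eq_norm_sq]
      field_simp
    have hcont : Continuous fun y => (fderiv ℝ f y) e :=
      (hf.continuous_fderiv (by norm_num)).clm_apply continuous_const
    have hopen : IsOpen {y : EuclideanSpace ℝ (Fin (n+1)) | c / 2 < (fderiv ℝ f y) e} :=
      isOpen_lt continuous_const hcont
    have hzmem : z ∈ {y : EuclideanSpace ℝ (Fin (n+1)) | c / 2 < (fderiv ℝ f y) e} := by
      show c / 2 < (fderiv ℝ f z) e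
      rw [hfe, hvn]
      linarith
    obtain ⟨ρ, hρ, hball⟩ := Metric.isOpen_iff.1 hopen z hzmem
    exact ⟨ρ, hρ, e, hen, fun y hy => (hball hy).le⟩
  choose! ρ hρpos e he hballs using hcover
  obtain ⟨bs, hbsub, hbfin, hbcov⟩ := hFcpt.elim_finite_subcover_image
    (fun z (hz : z ∈ frontier Ω) => Metric.isOpen_ball)
    (fun x hx => Set.mem_biUnion hx (Metric.mem_ball_self (hρpos x hx)))
  set U : Set (EuclideanSpace ℝ (Fin (n+1))) := ⋃ z ∈ bs, Metric.ball z (ρ z) with hU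
  have hUopen : IsOpen U := isOpen_biUnion fun z _ => Metric.isOpen_ball
  -- δ such that |f| ≤ δ on Ω forces membership in U
  obtain ⟨δ, hδpos, hδ⟩ : ∃ δ : ℝ, 0 < δ ∧ ∀ x ∈ Ω, |f x| ≤ δ → x ∈ U := by
    set K := closure Ω \ U with hK
    have hKcpt : IsCompact K := hclcpt.diff hUopen
    have hKΩ : K ⊆ Ω := by
      intro x hx
      have hx1 : x ∈ closure Ω := hx.1
      rw [← hΩopen.interior_eq]
      rcases (closure_eq_interior_union_frontier Ω ▸ hx1) with h | h
      · exact h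
      · exact absurd (hbcov h) hx.2
    rcases K.eq_empty_or_nonempty with hKe | hKne
    · refine ⟨1, one_pos, fun x hx _ => ?_⟩
      by_contra hxU
      have : x ∈ K := ⟨subset_closure hx, hxU⟩
      rw [hKe] at this
      exact this
    · obtain ⟨x₀, hx₀K, hx₀max⟩ := hKcpt.exists_isMaxOn hKne hf.continuous.continuousOn
      have hfx₀ : f x₀ < 0 := by
        have := hKΩ hx₀K
        rw [hΩf] at this
        exact this
      refine ⟨-f x₀ / 2, by linarith, fun x hx habs => ?_⟩
      by_contra hxU
      have hxK : x ∈ K := ⟨subset_closure hx, hxU⟩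
      have h1 : f x ≤ f x₀ := hx₀max hxK
      have h2 : f x < 0 := by rw [hΩf] at hx; exact hx
      rw [abs_of_neg h2] at habs
      linarith
  -- measure bound for sublevel sets of |f|
  set D : ENNReal := ∑ z ∈ hbfin.toFinset, (ENNReal.ofReal (2 * ρ z)) ^ n with hD
  have hDlt : D < ⊤ := by
    rw [hD]
    refine ENNReal.sum_lt_top.2 fun z _ => ?_
    exact ENNReal.pow_lt_top ENNReal.ofReal_lt_top
  have hmeas_bound : ∀ t : ℝ, 0 ≤ t → t ≤ δ →
      volume {x ∈ Ω | |f x| ≤ t} ≤ ENNReal.ofReal (2 * t / (c / 2)) * D := by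
    intro t ht htδ
    have hsub : {x ∈ Ω | |f x| ≤ t} ⊆
        ⋃ z ∈ hbfin.toFinset, {x ∈ Metric.ball z (ρ z) | |f x| ≤ t} := by
      intro x hx
      have hxU : x ∈ U := hδ x hx.1 (le_trans hx.2 htδ)
      rw [hU] at hxU
      obtain ⟨z, hz, hzx⟩ := Set.mem_iUnion₂.1 hxU
      exact Set.mem_iUnion₂.2 ⟨z, hbfin.mem_toFinset.2 hz, hzx, hx.2⟩
    refine le_trans (measure_mono hsub) ?_
    refine le_trans (measure_biUnion_finset_le _ _) ?_
    rw [hD, Finset.mul_sum]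
    refine Finset.sum_le_sum fun z hz => ?_
    have hzF : z ∈ frontier Ω := hbsub (hbfin.mem_toFinset.1 hz)
    exact slab_bound f hf1 z (e z) (he z hzF) t hc2 (fun y hy => hballs z hzF y hy)
  -- conclude integrability
  set d : EuclideanSpace ℝ (Fin (n+1)) → ℝ := fun x => Metric.infDist x (frontier Ω) with hd
  have hdcont : Continuous d := Metric.continuous_infDist_pt _
  have hdnn : ∀ x, 0 ≤ d x := fun x => Metric.infDist_nonneg
  set fn : EuclideanSpace ℝ (Fin (n+1)) → ℝ := fun x => d x ^ (-a) with hfn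
  have hfneq : fn = fun x => if d x = 0 then 0 else Real.exp (Real.log (d x) * (-a)) := by
    funext x
    rcases eq_or_lt_of_le (hdnn x) with h0 | hpos
    · show d x ^ (-a) = _
      rw [if_pos h0.symm, ← h0]
      exact Real.zero_rpow (by linarith)
    · show d x ^ (-a) = _
      rw [if_neg (ne_of_gt hpos)]
      exact Real.rpow_def_of_pos hpos _
  have hfnmeas : Measurable fn := by
    rw [hfneq]
    exact Measurable.ite (measurableSet_eq_fun hdcont.measurable measurable_const)
      measurable_const
      (Real.measurable_exp.comp ((Real.measurable_log.comp hdcont.measurable).mul_const _))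
  have hfnnn : ∀ x, 0 ≤ fn x := fun x => Real.rpow_nonneg (hdnn x) _
  refine ⟨hfnmeas.aestronglyMeasurable, ?_⟩
  rw [hasFiniteIntegral_iff_ofReal (Filter.Eventually.of_forall hfnnn)]
  rw [lintegral_eq_lintegral_meas_lt (volume.restrict Ω)
      (Filter.Eventually.of_forall hfnnn) hfnmeas.aemeasurable]
  -- threshold
  set s₀ : ℝ := (δ / L) ^ (-a) with hs₀
  have hδL : 0 < δ / L := div_pos hδpos hL
  have hs₀pos : 0 < s₀ := Real.rpow_pos_of_pos hδL _
  have hane : a ≠ 0 := ne_of_gt ha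
  have hmul1 : (-a) * (-1/a) = 1 := by field_simp
  -- pointwise distribution bound
  have hdistrib : ∀ t : ℝ, 0 < t →
      (volume.restrict Ω) {x | t < fn x} ≤ volume {x ∈ Ω | |f x| ≤ L * t ^ (-1/a)} := by
    intro t ht
    rw [Measure.restrict_apply (measurableSet_lt measurable_const hfnmeas)]
    apply measure_mono
    rintro x ⟨hxf, hxΩ⟩
    have hxf' : t < d x ^ (-a) := hxf
    have hdpos : 0 < d x := by
      rcases eq_or_lt_of_le (hdnn x) with h0 | h
      · exfalso
        rw [← h0, Real.zero_rpow (by linarith : -a ≠ 0)] at hxf'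
        exact absurd hxf' (not_lt.2 ht.le)
      · exact h
    have h1 : (d x ^ (-a)) ^ (-1/a) < t ^ (-1/a) :=
      Real.rpow_lt_rpow_of_neg ht hxf' (by rw [neg_div]; simp [one_div, inv_pos.2 ha])
    have h2 : (d x ^ (-a)) ^ (-1/a) = d x := by
      rw [← Real.rpow_mul (hdnn x), hmul1, Real.rpow_one]
    refine ⟨hxΩ, ?_⟩
    have h4 : d x < t ^ (-1/a) := h2 ▸ h1
    calc |f x| ≤ L * d x := hdist x hxΩ
      _ ≤ L * t ^ (-1/a) := mul_le_mul_of_nonneg_left h4.le hL.le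
  -- bound for large t
  have hlarge : ∀ t : ℝ, s₀ ≤ t → volume {x ∈ Ω | |f x| ≤ L * t ^ (-1/a)}
      ≤ ENNReal.ofReal (2 * (L * t ^ (-1/a)) / (c/2)) * D := by
    intro t hts
    have htpos : 0 < t := lt_of_lt_of_le hs₀pos hts
    have hu : t ^ (-1/a) ≤ δ / L := by
      have h5 : t ^ (-1/a) ≤ s₀ ^ (-1/a) :=
        Real.rpow_le_rpow_of_nonpos hs₀pos hts
          (by rw [neg_div]; simp [one_div, (inv_pos.2 ha).le])
      have h6 : s₀ ^ (-1/a) = δ / L := by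
        rw [hs₀, ← Real.rpow_mul hδL.le, hmul1, Real.rpow_one]
      rw [h6] at h5
      exact h5
    apply hmeas_bound
    · positivity
    · calc L * t ^ (-1/a) ≤ L * (δ / L) := mul_le_mul_of_nonneg_left hu hL.le
        _ = δ := by field_simp
  -- split the integral
  have hsplit : Set.Ioi (0:ℝ) = Set.Ioc 0 s₀ ∪ Set.Ioi s₀ :=
    (Set.Ioc_union_Ioi_eq_Ioi hs₀pos.le).symm
  refine lt_of_le_of_lt (le_trans (le_of_eq (by rw [hsplit]))
    (lintegral_union_le _ _ _)) ?_
  rw [ENNReal.add_lt_top]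
  constructor
  · -- small t piece
    calc ∫⁻ t in Set.Ioc 0 s₀, (volume.restrict Ω) {x | t < fn x}
        ≤ ∫⁻ _ in Set.Ioc 0 s₀, volume Ω := by
          refine setLIntegral_mono' measurableSet_Ioc fun t _ => ?_
          calc (volume.restrict Ω) {x | t < fn x} ≤ (volume.restrict Ω) Set.univ :=
                measure_mono (Set.subset_univ _)
            _ = volume Ω := by rw [Measure.restrict_apply_univ]
      _ = volume Ω * volume (Set.Ioc 0 s₀) := setLIntegral_const _ _
      _ < ⊤ := ENNReal.mul_lt_top hΩbdd.measure_lt_top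
          (by rw [Real.volume_Ioc]; exact ENNReal.ofReal_lt_top)
  · -- large t piece
    have hexp : (-1/a) < -1 := by
      have h6 : 1 < 1/a := by rw [lt_div_iff₀ ha]; linarith
      rw [neg_div]
      linarith
    have heq : (fun t : ℝ => 2 * (L * t ^ (-1/a)) / (c/2))
        = fun t : ℝ => (2 * L / (c/2)) * t ^ (-1/a) := by
      funext t; ring
    have hg : MeasureTheory.IntegrableOn
        (fun t : ℝ => 2 * (L * t ^ (-1/a)) / (c/2)) (Set.Ioi s₀) volume := by
      rw [heq]
      exact (integrableOn_Ioi_rpow_of_lt hexp hs₀pos).const_mul _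
    have hfin : ∫⁻ t in Set.Ioi s₀, ENNReal.ofReal (2 * (L * t ^ (-1/a)) / (c/2)) < ⊤ := by
      refine lt_of_le_of_lt (lintegral_mono fun t => ?_) hg.2
      rw [Real.enorm_eq_ofReal_abs]
      exact ENNReal.ofReal_le_ofReal (le_abs_self _)
    calc ∫⁻ t in Set.Ioi s₀, (volume.restrict Ω) {x | t < fn x}
        ≤ ∫⁻ t in Set.Ioi s₀, ENNReal.ofReal (2 * (L * t ^ (-1/a)) / (c/2)) * D := by
          refine setLIntegral_mono' measurableSet_Ioi fun t htmem => ?_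
          exact le_trans (hdistrib t (lt_trans hs₀pos htmem))
            (hlarge t (le_of_lt htmem))
      _ = (∫⁻ t in Set.Ioi s₀, ENNReal.ofReal (2 * (L * t ^ (-1/a)) / (c/2))) * D :=
          lintegral_mul_const' D _ hDlt.ne
      _ < ⊤ := ENNReal.mul_lt_top hfin hDlt
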